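/- The LSE upper bound on softmax is tighter than the ER upper bound: for all x̃ with l̃ ≤ x̃ ≤ ũ (and l̃₁ = ũ₁ = x̃₁ = 0, S(l̃) < S(ũ)), p̄₁ · (lse(ũ) − lse(x̃))/(lse(ũ) − lse(l̃)) + p̲₁ · (lse(x̃) − lse(l̃))/(lse(ũ) − lse(l̃)) ≤ p̄₁ · (S(ũ) − S(x̃))/(S(ũ) − S(l̃)) + p̲₁ · (S(x̃) − S(l̃))/(S(ũ) − S(l̃)). -/

import Mathlib

theorem LSE_upper_tighter_than_ER (K : ℕ) (hK : 0 < K) (lt x ut : Fin K → ℝ)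
    (hl : ∀ j, lt j ≤ x j) (hu : ∀ j, x j ≤ ut j)
    (hl1 : lt ⟨0, hK⟩ = 0) (hx1 : x ⟨0, hK⟩ = 0) (hu1 : ut ⟨0, hK⟩ = 0)
    (hS : (∑ j, Real.exp (lt j)) < ∑ j, Real.exp (ut j)) :
    (1 / ∑ j, Real.exp (lt j)) *
        ((Real.log (∑ j, Real.exp (ut j)) - Real.log (∑ j, Real.exp (x j))) /
          (Real.log (∑ j, Real.exp (ut j)) - Real.log (∑ j, Real.exp (lt j)))) +
      (1 / ∑ j, Real.exp (ut j)) *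
        ((Real.log (∑ j, Real.exp (x j)) - Real.log (∑ j, Real.exp (lt j))) /
          (Real.log (∑ j, Real.exp (ut j)) - Real.log (∑ j, Real.exp (lt j)))) ≤
    (1 / ∑ j, Real.exp (lt j)) *
        (((∑ j, Real.exp (ut j)) - ∑ j, Real.exp (x j)) /
          ((∑ j, Real.exp (ut j)) - ∑ j, Real.exp (lt j))) +
      (1 / ∑ j, Real.exp (ut j)) *
        (((∑ j, Real.exp (x j)) - ∑ j, Real.exp (lt j)) /
          ((∑ j, Real.exp (ut j)) - ∑ j, Real.exp (lt j))) := by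
  haveI : Nonempty (Fin K) := Fin.pos_iff_nonempty.mp hK
  set A := ∑ j, Real.exp (lt j) with hAdef
  set B := ∑ j, Real.exp (x j) with hBdef
  set C := ∑ j, Real.exp (ut j) with hCdef
  have hA : 0 < A := Finset.sum_pos (fun j _ => Real.exp_pos _) Finset.univ_nonempty
  have hAB : A ≤ B := Finset.sum_le_sum fun j _ => Real.exp_le_exp.mpr (hl j)
  have hBC : B ≤ C := Finset.sum_le_sum fun j _ => Real.exp_le_exp.mpr (hu j)
  have hB : 0 < B := lt_of_lt_of_le hA hAB
  have hC : 0 < C := lt_of_lt_of_le hB hBC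
  have hlogAC : Real.log A < Real.log C := Real.log_lt_log hA hS
  have hD1 : 0 < Real.log C - Real.log A := sub_pos.mpr hlogAC
  have hD2 : 0 < C - A := sub_pos.mpr hS
  set t : ℝ := (B - A) / (C - A) with htdef
  have ht0 : 0 ≤ t := div_nonneg (sub_nonneg.mpr hAB) hD2.le
  have ht1 : t ≤ 1 := (div_le_one hD2).mpr (by linarith)
  have hcomb : (1 - t) * A + t * C = B := by
    have : t * (C - A) = B - A := div_mul_cancel₀ _ hD2.ne'
    nlinarith [this]
  have hlogB : (1 - t) * Real.log A + t * Real.log C ≤ Real.log B := by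
    have := strictConcaveOn_log_Ioi.concaveOn.2 (Set.mem_Ioi.mpr hA)
      (Set.mem_Ioi.mpr hC) (by linarith : (0:ℝ) ≤ 1 - t) ht0 (by ring)
    simpa [smul_eq_mul, hcomb] using this
  set s : ℝ := (Real.log B - Real.log A) / (Real.log C - Real.log A) with hsdef
  have hts : t ≤ s := by
    rw [hsdef, le_div_iff₀ hD1]
    nlinarith [hlogB]
  have hs1 : s ≤ 1 := (div_le_one hD1).mpr (by
    have := Real.log_le_log hB hBC
    linarith)
  have e1 : (Real.log C - Real.log B) / (Real.log C - Real.log A) = 1 - s := by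
    rw [hsdef]; field_simp; ring
  have e2 : (C - B) / (C - A) = 1 - t := by
    rw [htdef]; field_simp; ring
  rw [e1, e2]
  have hinv : 1 / C ≤ 1 / A := one_div_le_one_div_of_le hA hS.le
  have hApos : 0 < 1 / A := by positivity
  have hCpos : 0 < 1 / C := by positivity
  nlinarith [mul_nonneg (sub_nonneg.mpr hts) (sub_nonneg.mpr hinv)]
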